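/- Let R = 𝔬/𝔭^ℓ, 0 ≤ r ≤ ℓ-1, I_r = q^r(q-1), and φ_r^{(1)} = (1/√I_r) Σ_{χ ∈ R̂_r} χ. Then the inner product ⟨φ_r^{(1)}(π^r + ·), φ_r^{(1)}⟩ = (1/|R|) Σ_{a∈R} φ_r^{(1)}(π^r + a) conj(φ_r^{(1)}(a)) equals −1/(q-1). -/

import Mathlib

set_option maxHeartbeats 1000000


open scoped BigOperators
open ComplexConjugate

/-- The image in `R = 𝔬/𝔭^ℓ` of the ideal `𝔭^r`. -/
def idealImage (O : Type) [CommRing O] (π : O) (ℓ r : ℕ) :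
    Ideal (O ⧸ (Ideal.span {π} ^ ℓ)) :=
  Ideal.map (Ideal.Quotient.mk (Ideal.span {π} ^ ℓ)) (Ideal.span {π} ^ r)

/-- The set of characters `χ` of `R = 𝔬/𝔭^ℓ` with dual valuation `v̂(χ) = r`. -/
def dualLevel (O : Type) [CommRing O] (π : O) (ℓ r : ℕ) :
    Set (AddChar (O ⧸ (Ideal.span {π} ^ ℓ)) ℂ) :=
  {χ | (∀ a ∈ idealImage O π ℓ (r + 1), χ a = 1) ∧ ∃ a ∈ idealImage O π ℓ r, χ a ≠ 1}

/-- The normalized function `φ_r^{(1)} = (1/√I_r) Σ_{χ∈R̂_r} χ`, `I_r = q^r(q-1)`. -/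
noncomputable def phiOne (O : Type) [CommRing O] (π : O) (q ℓ r : ℕ)
    (a : O ⧸ (Ideal.span {π} ^ ℓ)) : ℂ :=
  (1 / (Real.sqrt ((q : ℝ) ^ r * ((q : ℝ) - 1)) : ℂ)) * ∑ᶠ χ ∈ dualLevel O π ℓ r, χ a

private lemma addChar_congr {R : Type} [CommRing R] {J : Ideal R} {χ : AddChar R ℂ}
    (hχ : ∀ a ∈ J, χ a = 1) {x y : R}
    (h : Ideal.Quotient.mk J x = Ideal.Quotient.mk J y) : χ x = χ y := by
  have hxy : x - y ∈ J := Ideal.Quotient.eq.mp h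
  have hx : x = y + (x - y) := by ring
  rw [hx, AddChar.map_add_eq_mul, hχ _ hxy, mul_one]

private lemma exists_addChar_lift {R : Type} [CommRing R] (J : Ideal R) (χ : AddChar R ℂ)
    (hχ : ∀ a ∈ J, χ a = 1) :
    ∃ ψ : AddChar (R ⧸ J) ℂ,
      ψ.compAddMonoidHom (Ideal.Quotient.mk J).toAddMonoidHom = χ := by
  have hs : Function.Surjective (Ideal.Quotient.mk J) := Ideal.Quotient.mk_surjective
  set s : (R ⧸ J) → R := Function.surjInv hs with hsdef
  have hmk : ∀ b, Ideal.Quotient.mk J (s b) = b := fun b => Function.surjInv_eq hs b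
  refine ⟨⟨fun b => χ (s b), ?_, ?_⟩, ?_⟩
  · have : χ (s 0) = χ 0 := addChar_congr hχ (by rw [hmk, map_zero])
    simpa using this
  · intro a b
    have : χ (s (a + b)) = χ (s a + s b) :=
      addChar_congr hχ (by rw [map_add, hmk, hmk, hmk])
    simp only [this, AddChar.map_add_eq_mul]
  · ext x
    have : χ (s (Ideal.Quotient.mk J x)) = χ x := addChar_congr hχ (by rw [hmk])
    simpa using this

private lemma sum_trivialOn {R : Type} [CommRing R] [Fintype R] (J : Ideal R)
    [Finite (R ⧸ J)] (x : R) :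
    ∑ χ ∈ (Set.toFinite {χ : AddChar R ℂ | ∀ a ∈ J, χ a = 1}).toFinset, χ x
      = ∑ ψ : AddChar (R ⧸ J) ℂ, ψ (Ideal.Quotient.mk J x) := by
  refine (Finset.sum_bij
    (fun (ψ : AddChar (R ⧸ J) ℂ) _ => ψ.compAddMonoidHom (Ideal.Quotient.mk J).toAddMonoidHom)
    ?_ ?_ ?_ ?_).symm
  · intro ψ _
    simp only [Set.Finite.mem_toFinset, Set.mem_setOf_eq]
    intro a ha
    have : Ideal.Quotient.mk J a = 0 := Ideal.Quotient.eq_zero_iff_mem.mpr ha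
    simp [this]
  · intro ψ₁ _ ψ₂ _ h
    exact AddChar.compAddMonoidHom_injective_left _
      (Ideal.Quotient.mk_surjective (I := J)) h
  · intro χ hχ
    simp only [Set.Finite.mem_toFinset, Set.mem_setOf_eq] at hχ
    obtain ⟨ψ, hψ⟩ := exists_addChar_lift J χ hχ
    exact ⟨ψ, Finset.mem_univ _, hψ⟩
  · intro ψ _
    simp

private lemma char_ortho {R : Type} [AddCommGroup R] [Fintype R]
    [DecidableEq (AddChar R ℂ)] (χ ψ : AddChar R ℂ) (x : R) :
    ∑ a : R, χ (x + a) * conj (ψ a) =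
      if χ = ψ then (Fintype.card R : ℂ) * χ x else 0 := by
  classical
  have h1 : ∀ a : R, χ (x + a) * conj (ψ a) = χ x * (χ * ψ⁻¹) a := by
    intro a
    rw [AddChar.map_add_eq_mul, AddChar.mul_apply, AddChar.inv_apply',
      AddChar.inv_apply_eq_conj]
    ring
  rw [Finset.sum_congr rfl fun a _ => h1 a, ← Finset.mul_sum, AddChar.sum_eq_ite]
  have h2 : (χ * ψ⁻¹ = 0) ↔ χ = ψ := by
    rw [show (0 : AddChar R ℂ) = 1 from rfl, mul_inv_eq_one]
  split_ifs with h h' h'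
  · ring
  · exact absurd (h2.mp h) h'
  · exact absurd (h2.mpr h') h
  · ring

/-- `⟨φ_r^{(1)}(π^r + ·), φ_r^{(1)}⟩ = -1/(q-1)`. -/
theorem stmt_11 (O : Type) [CommRing O] [IsDomain O] [IsDiscreteValuationRing O]
    (π : O) (hπ : Irreducible π) (q ℓ : ℕ)
    [Finite (O ⧸ Ideal.span {π})] (hq : Nat.card (O ⧸ Ideal.span {π}) = q)
    (r : ℕ) (hr : r ≤ ℓ - 1) (hℓ : 1 ≤ ℓ) :
    (1 / (Nat.card (O ⧸ (Ideal.span {π} ^ ℓ)) : ℂ)) *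
        ∑ᶠ a : O ⧸ (Ideal.span {π} ^ ℓ),
          phiOne O π q ℓ r (Ideal.Quotient.mk (Ideal.span {π} ^ ℓ) (π ^ r) + a) *
            conj (phiOne O π q ℓ r a) =
      -1 / ((q : ℂ) - 1) := by
  classical
  have hπ0 : π ≠ 0 := hπ.ne_zero
  have hrl : r + 1 ≤ ℓ := by omega
  haveI hPp : (Ideal.span {π} : Ideal O).IsPrime := (Ideal.span_singleton_prime hπ0).mpr
    (UniqueFactorizationMonoid.irreducible_iff_prime.mp hπ)
  have hPbot : (Ideal.span {π} : Ideal O) ≠ ⊥ := by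
    rw [Ne, Ideal.span_singleton_eq_bot]; exact hπ0
  have hq1 : 1 < q := by
    rw [← hq]
    haveI : Nontrivial (O ⧸ Ideal.span {π}) := Ideal.Quotient.nontrivial_iff.mpr hPp.ne_top
    exact Finite.one_lt_card_iff_nontrivial.mpr ‹_›
  have hcard : ∀ m : ℕ, Nat.card (O ⧸ (Ideal.span {π} : Ideal O) ^ m) = q ^ m := by
    intro m
    have h := cardQuot_pow_of_prime (P := (Ideal.span {π} : Ideal O)) hPbot (i := m)
    rwa [Submodule.cardQuot_apply, Submodule.cardQuot_apply, hq] at h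
  haveI hRfin : Finite (O ⧸ (Ideal.span {π} : Ideal O) ^ ℓ) :=
    Nat.finite_of_card_ne_zero (by rw [hcard]; exact pow_ne_zero _ (by omega))
  haveI : Fintype (O ⧸ (Ideal.span {π} : Ideal O) ^ ℓ) := Fintype.ofFinite _
  -- membership facts
  have hππ : π ∈ Ideal.span {π} := Ideal.subset_span rfl
  have hπr : π ^ r ∈ (Ideal.span {π} : Ideal O) ^ r := Ideal.pow_mem_pow hππ r
  have hxJ0 : Ideal.Quotient.mk (Ideal.span {π} ^ ℓ) (π ^ r) ∈ idealImage O π ℓ r := by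
    simp only [idealImage]
    exact Ideal.mem_map_of_mem _ hπr
  have hxJ1 : Ideal.Quotient.mk (Ideal.span {π} ^ ℓ) (π ^ r) ∉ idealImage O π ℓ (r + 1) := by
    intro hmem
    simp only [idealImage] at hmem
    rw [Ideal.mem_map_iff_of_surjective _ Ideal.Quotient.mk_surjective] at hmem
    obtain ⟨y, hy, hyx⟩ := hmem
    have h2 : y - π ^ r ∈ (Ideal.span {π} : Ideal O) ^ ℓ := Ideal.Quotient.eq.mp hyx
    have h3 : π ^ r ∈ (Ideal.span {π} : Ideal O) ^ (r + 1) := by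
      have h4 := Ideal.sub_mem _ hy (Ideal.pow_le_pow_right hrl h2)
      simpa using h4
    rw [Ideal.span_singleton_pow, Ideal.mem_span_singleton] at h3
    obtain ⟨c, hc⟩ := h3
    have h5 : π ^ r * 1 = π ^ r * (π * c) := by
      conv_lhs => rw [mul_one, hc]
      ring
    have h6 : (1 : O) = π * c := mul_left_cancel₀ (pow_ne_zero _ hπ0) h5
    exact hπ.not_isUnit (IsUnit.of_mul_eq_one (b := c) h6.symm)
  haveI : Finite ((O ⧸ (Ideal.span {π} : Ideal O) ^ ℓ) ⧸ idealImage O π ℓ (r + 1)) :=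
    Finite.of_surjective _ Ideal.Quotient.mk_surjective
  haveI : Finite ((O ⧸ (Ideal.span {π} : Ideal O) ^ ℓ) ⧸ idealImage O π ℓ r) :=
    Finite.of_surjective _ Ideal.Quotient.mk_surjective
  set x : O ⧸ (Ideal.span {π} : Ideal O) ^ ℓ := Ideal.Quotient.mk (Ideal.span {π} ^ ℓ) (π ^ r)
    with hx
  set T1f := (Set.toFinite {χ : AddChar (O ⧸ (Ideal.span {π} : Ideal O) ^ ℓ) ℂ |
    ∀ a ∈ idealImage O π ℓ (r + 1), χ a = 1}).toFinset with hT1f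
  set T0f := (Set.toFinite {χ : AddChar (O ⧸ (Ideal.span {π} : Ideal O) ^ ℓ) ℂ |
    ∀ a ∈ idealImage O π ℓ r, χ a = 1}).toFinset with hT0f
  have hS1 : ∑ χ ∈ T1f, χ x = 0 := by
    rw [hT1f, hx, sum_trivialOn]
    refine AddChar.sum_apply_eq_zero_iff_ne_zero.mpr ?_
    exact fun h => hxJ1 (Ideal.Quotient.eq_zero_iff_mem.mp h)
  have hS0 : ∑ χ ∈ T0f, χ x = (q : ℂ) ^ r := by
    rw [hT0f, hx, sum_trivialOn]
    have h0 : Ideal.Quotient.mk (idealImage O π ℓ r)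
        (Ideal.Quotient.mk (Ideal.span {π} ^ ℓ) (π ^ r)) = 0 :=
      Ideal.Quotient.eq_zero_iff_mem.mpr hxJ0
    rw [h0]
    haveI : Fintype ((O ⧸ (Ideal.span {π} : Ideal O) ^ ℓ) ⧸ idealImage O π ℓ r) :=
      Fintype.ofFinite _
    rw [Finset.sum_congr rfl fun ψ _ => ψ.map_zero_eq_one, Finset.sum_const,
      nsmul_eq_mul, mul_one, Finset.card_univ, AddChar.card_eq,
      ← Nat.card_eq_fintype_card]
    have he : Nat.card ((O ⧸ (Ideal.span {π} : Ideal O) ^ ℓ) ⧸ idealImage O π ℓ r)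
        = Nat.card (O ⧸ (Ideal.span {π} : Ideal O) ^ r) := by
      simp only [idealImage]
      exact Nat.card_congr (DoubleQuot.quotQuotEquivQuotOfLE
        (Ideal.pow_le_pow_right (by omega : r ≤ ℓ))).toEquiv
    rw [he, hcard r]
    push_cast
    ring
  have hT0sub : T0f ⊆ T1f := by
    intro χ hχ
    rw [hT0f, Set.Finite.mem_toFinset, Set.mem_setOf_eq] at hχ
    rw [hT1f, Set.Finite.mem_toFinset, Set.mem_setOf_eq]
    intro a ha
    refine hχ a ?_
    simp only [idealImage] at ha ⊢
    exact Ideal.map_mono (Ideal.pow_le_pow_right (by omega)) ha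
  have hDfin : (dualLevel O π ℓ r).Finite := Set.toFinite _
  set DF := hDfin.toFinset with hDF
  have hDsplit : DF = T1f \ T0f := by
    ext χ
    rw [hDF, Set.Finite.mem_toFinset, Finset.mem_sdiff, hT1f, hT0f,
      Set.Finite.mem_toFinset, Set.Finite.mem_toFinset]
    simp only [dualLevel, Set.mem_setOf_eq]
    constructor
    · rintro ⟨h1, a, ha, hne⟩
      exact ⟨h1, fun h => hne (h a ha)⟩
    · rintro ⟨h1, h2⟩
      refine ⟨h1, ?_⟩
      push_neg at h2
      exact h2
  have hDsum : ∑ χ ∈ DF, χ x = -((q : ℂ) ^ r) := by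
    rw [hDsplit, Finset.sum_sdiff_eq_sub hT0sub, hS1, hS0]
    ring
  set c : ℂ := (1 / (Real.sqrt ((q : ℝ) ^ r * ((q : ℝ) - 1)) : ℂ)) with hc
  have hphi : ∀ y, phiOne O π q ℓ r y = c * ∑ χ ∈ DF, χ y := by
    intro y
    rw [phiOne, finsum_mem_eq_finite_toFinset_sum _ hDfin]
  have hcconj : conj c = c := by
    rw [hc]
    simp [map_div₀, Complex.conj_ofReal]
  have key : ∀ a : O ⧸ (Ideal.span {π} : Ideal O) ^ ℓ,
      (c * ∑ χ ∈ DF, χ (x + a)) * conj (c * ∑ ψ ∈ DF, ψ a)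
        = c * c * ∑ χ ∈ DF, ∑ ψ ∈ DF, χ (x + a) * conj (ψ a) := by
    intro a
    rw [map_mul, map_sum, hcconj, mul_mul_mul_comm, Finset.sum_mul_sum]
  have inner : ∀ χ ∈ DF, (∑ ψ ∈ DF, ∑ a : O ⧸ (Ideal.span {π} : Ideal O) ^ ℓ,
      χ (x + a) * conj (ψ a))
      = (Fintype.card (O ⧸ (Ideal.span {π} : Ideal O) ^ ℓ) : ℂ) * χ x := by
    intro χ hχ
    rw [Finset.sum_congr rfl fun ψ _ => char_ortho χ ψ x, Finset.sum_ite_eq,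
      if_pos hχ]
  have main2 : (∑ a : O ⧸ (Ideal.span {π} : Ideal O) ^ ℓ,
      (c * ∑ χ ∈ DF, χ (x + a)) * conj (c * ∑ ψ ∈ DF, ψ a))
        = c * c * ((Fintype.card (O ⧸ (Ideal.span {π} : Ideal O) ^ ℓ) : ℂ)
            * ∑ χ ∈ DF, χ x) := by
    rw [Finset.sum_congr rfl fun a _ => key a, ← Finset.mul_sum]
    congr 1
    rw [Finset.sum_comm, Finset.mul_sum]
    refine Finset.sum_congr rfl fun χ hχ => ?_
    rw [Finset.sum_comm, inner χ hχ]
  -- assemble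
  rw [finsum_eq_sum_of_fintype]
  simp only [hphi]
  rw [main2, hDsum]
  have hcc : c * c = 1 / ((q : ℂ) ^ r * ((q : ℂ) - 1)) := by
    rw [hc, div_mul_div_comm, one_mul, ← Complex.ofReal_mul,
      Real.mul_self_sqrt (mul_nonneg (by positivity)
        (by linarith [(by exact_mod_cast hq1.le : (1:ℝ) ≤ (q:ℝ))]))]
    push_cast
    ring
  rw [hcc, ← Nat.card_eq_fintype_card, hcard ℓ]
  have hq0 : (q : ℂ) ≠ 0 := by
    exact_mod_cast (by omega : q ≠ 0)
  have hq1' : (q : ℂ) - 1 ≠ 0 := sub_ne_zero.mpr (by exact_mod_cast (by omega : q ≠ 1))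
  push_cast
  field_simp
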